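/- (Gauge equivalence of the MNLS and GNLS equations.) Let q : ℝ² → M_{k×(n−k)}(ℂ) be a smooth solution of the matrix nonlinear Schrödinger equation q_t = i(q_xx + 2 q q* q), let u = [[0, q],[−q*, 0]] and Q₂ = [[−i q q*, i q_x],[i q_x*, i q* q]], and let E : ℝ² → U(n) be a smooth map satisfying E⁻¹E_x = u and E⁻¹E_t = Q₂. Then γ := E a E⁻¹, with a = (i/2)·diag(I_k, −I_{n−k}), satisfies the geometric nonlinear Schrödinger equation γ_t = [γ, γ_xx]. -/

import Mathlib

open Matrix

attribute [local instance] Matrix.normedAddCommGroup Matrix.normedSpace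

section Helpers

variable {l m n : Type*} [Fintype l] [Fintype m] [Fintype n]

/-- Matrix multiplication as a continuous `ℝ`-bilinear map. -/
noncomputable def mulCLM : Matrix l m ℂ →L[ℝ] Matrix m n ℂ →L[ℝ] Matrix l n ℂ :=
  LinearMap.toContinuousLinearMap
  { toFun := fun A => LinearMap.toContinuousLinearMap
      { toFun := fun B => A * B
        map_add' := fun B C => Matrix.mul_add A B C
        map_smul' := fun r B => (Matrix.mul_smul A r B) }
    map_add' := fun A B => by ext C; simp [Matrix.add_mul]
    map_smul' := fun r A => by ext C; simp [Matrix.smul_mul] }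

@[simp] lemma mulCLM_apply (A : Matrix l m ℂ) (B : Matrix m n ℂ) : mulCLM A B = A * B := rfl

lemma HasDerivAt.matmul {f : ℝ → Matrix l m ℂ} {g : ℝ → Matrix m n ℂ}
    {f' : Matrix l m ℂ} {g' : Matrix m n ℂ} {x : ℝ}
    (hf : HasDerivAt f f' x) (hg : HasDerivAt g g' x) :
    HasDerivAt (fun y => f y * g y) (f' * g x + f x * g') x := by
  have h := ((mulCLM (l := l) (m := m) (n := n)).isBoundedBilinearMap.hasFDerivAt
    (f x, g x)).comp_hasDerivAt x (hf.prodMk hg)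
  exact h.congr_deriv (by simp [IsBoundedBilinearMap.deriv_apply, add_comm]; rfl)

/-- Conjugate transpose as a continuous `ℝ`-linear map. -/
noncomputable def ctCLM : Matrix l m ℂ →L[ℝ] Matrix m l ℂ :=
  LinearMap.toContinuousLinearMap
  { toFun := fun A => Aᴴ
    map_add' := fun A B => Matrix.conjTranspose_add A B
    map_smul' := fun r A => by
      simpa using Matrix.conjTranspose_smul_non_comm (r : ℂ) A (by simp [Complex.ext_iff]) }

lemma HasDerivAt.ct {f : ℝ → Matrix l m ℂ} {f' : Matrix l m ℂ} {x : ℝ}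
    (hf : HasDerivAt f f' x) : HasDerivAt (fun y => (f y)ᴴ) f'ᴴ x := by
  have := (ctCLM (l := l) (m := m)).hasFDerivAt.comp_hasDerivAt x hf
  exact this

variable [DecidableEq l] [DecidableEq m]

/-- Off-diagonal block inclusion as a continuous `ℝ`-linear map. -/
noncomputable def trCLM : Matrix l m ℂ →L[ℝ] Matrix (l ⊕ m) (l ⊕ m) ℂ :=
  LinearMap.toContinuousLinearMap
  { toFun := fun B => Matrix.fromBlocks 0 B 0 0
    map_add' := fun A B => by
      simp [Matrix.fromBlocks_add]
    map_smul' := fun r A => by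
      simp [Matrix.fromBlocks_smul] }

noncomputable def blCLM : Matrix m l ℂ →L[ℝ] Matrix (l ⊕ m) (l ⊕ m) ℂ :=
  LinearMap.toContinuousLinearMap
  { toFun := fun B => Matrix.fromBlocks 0 0 B 0
    map_add' := fun A B => by
      simp [Matrix.fromBlocks_add]
    map_smul' := fun r A => by
      simp [Matrix.fromBlocks_smul] }

lemma HasDerivAt.offDiagBlocks {f : ℝ → Matrix l m ℂ} {g : ℝ → Matrix m l ℂ}
    {f' : Matrix l m ℂ} {g' : Matrix m l ℂ} {x : ℝ}
    (hf : HasDerivAt f f' x) (hg : HasDerivAt g g' x) :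
    HasDerivAt (fun y => Matrix.fromBlocks 0 (f y) (g y) 0)
      (Matrix.fromBlocks 0 f' g' 0) x := by
  have h1 := (trCLM (l := l) (m := m)).hasFDerivAt.comp_hasDerivAt x hf
  have h2 := (blCLM (l := l) (m := m)).hasFDerivAt.comp_hasDerivAt x hg
  have h := h1.add h2
  simp only [trCLM, blCLM, LinearMap.coe_toContinuousLinearMap', LinearMap.coe_mk,
    AddHom.coe_mk] at h
  have e : (fun y => Matrix.fromBlocks 0 (f y) (g y) 0) =
      (fun B => Matrix.fromBlocks 0 B 0 0) ∘ f + (fun B => Matrix.fromBlocks 0 0 B 0) ∘ g := by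
    funext y; simp [Matrix.fromBlocks_add]
  rw [e]
  exact h.congr_deriv (by
    show Matrix.fromBlocks 0 f' 0 0 + Matrix.fromBlocks 0 0 g' 0 = _
    simp [Matrix.fromBlocks_add])

/-- The key algebraic block identity. -/
lemma key_identity (q qx : Matrix l m ℂ)
    (a : Matrix (l ⊕ m) (l ⊕ m) ℂ) (ha : a = (Complex.I / 2) • Matrix.fromBlocks 1 0 0 (-1))
    (u ux Q₂ : Matrix (l ⊕ m) (l ⊕ m) ℂ)
    (hu : u = fromBlocks 0 q (-qᴴ) 0) (hux : ux = fromBlocks 0 qx (-qxᴴ) 0)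
    (hQ : Q₂ = fromBlocks ((-Complex.I) • (q * qᴴ)) (Complex.I • qx)
        (Complex.I • qxᴴ) (Complex.I • (qᴴ * q))) :
    Q₂ * a - a * Q₂ =
      a * (u * (u * a - a * u) - (u * a - a * u) * u + (ux * a - a * ux))
      - (u * (u * a - a * u) - (u * a - a * u) * u + (ux * a - a * ux)) * a := by
  subst ha hu hux hQ
  simp only [sub_eq_add_neg, Matrix.fromBlocks_smul, Matrix.fromBlocks_neg,
    Matrix.fromBlocks_add, Matrix.fromBlocks_multiply]
  rw [Matrix.fromBlocks_inj]
  refine ⟨?_, ?_, ?_, ?_⟩ <;>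
  · simp only [Matrix.smul_mul, Matrix.mul_smul, smul_smul, Matrix.mul_zero, Matrix.zero_mul,
      Matrix.mul_one, Matrix.one_mul, Matrix.mul_neg, Matrix.neg_mul, Matrix.add_mul,
      Matrix.mul_add, smul_add, smul_neg, neg_neg, add_zero, zero_add, neg_zero, smul_zero]
    module

end Helpers

/-- Gauge equivalence of MNLS and GNLS: if `q` is a smooth solution of the
matrix nonlinear Schrödinger equation `q_t = i(q_xx + 2qq*q)`, `u = [[0,q],[−q*,0]]`,
`Q₂ = [[−iqq*, iq_x],[iq_x*, iq*q]]`, and `E : ℝ² → U(n)` is a smooth map with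
`E⁻¹E_x = u` and `E⁻¹E_t = Q₂`, then `γ := E a E⁻¹` (with `a = (i/2)·diag(I_k, −I_{n−k})`)
satisfies the geometric nonlinear Schrödinger equation `γ_t = [γ, γ_xx]`. -/
theorem stmt4 (k m : ℕ) (hk : 0 < k) (hm : 0 < m)
    (a : Matrix (Fin k ⊕ Fin m) (Fin k ⊕ Fin m) ℂ)
    (ha : a = (Complex.I / 2) • Matrix.fromBlocks 1 0 0 (-1))
    (q : ℝ → ℝ → Matrix (Fin k) (Fin m) ℂ)
    (hq : ContDiff ℝ (⊤ : ℕ∞) fun p : ℝ × ℝ => q p.1 p.2)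
    -- partial derivatives of q
    (qx qxx qt : ℝ → ℝ → Matrix (Fin k) (Fin m) ℂ)
    (hqx : ∀ x t, qx x t = deriv (fun y => q y t) x)
    (hqxx : ∀ x t, qxx x t = deriv (fun y => qx y t) x)
    (hqt : ∀ x t, qt x t = deriv (fun s => q x s) t)
    -- q solves the MNLS equation
    (hMNLS : ∀ x t, qt x t = Complex.I • (qxx x t + (2 : ℂ) • (q x t * (q x t)ᴴ * q x t)))
    -- the associated block matrices u and Q₂
    (u Q₂ : ℝ → ℝ → Matrix (Fin k ⊕ Fin m) (Fin k ⊕ Fin m) ℂ)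
    (hu : ∀ x t, u x t = Matrix.fromBlocks 0 (q x t) (-(q x t)ᴴ) 0)
    (hQ₂ : ∀ x t, Q₂ x t = Matrix.fromBlocks
        ((-Complex.I) • (q x t * (q x t)ᴴ)) (Complex.I • qx x t)
        (Complex.I • (qx x t)ᴴ) (Complex.I • ((q x t)ᴴ * q x t)))
    -- the smooth unitary frame E
    (E : ℝ → ℝ → Matrix (Fin k ⊕ Fin m) (Fin k ⊕ Fin m) ℂ)
    (hE : ContDiff ℝ (⊤ : ℕ∞) fun p : ℝ × ℝ => E p.1 p.2)
    (hEunitary : ∀ x t, E x t ∈ Matrix.unitaryGroup (Fin k ⊕ Fin m) ℂ)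
    -- E⁻¹E_x = u and E⁻¹E_t = Q₂
    (hEx : ∀ x t, star (E x t) * deriv (fun y => E y t) x = u x t)
    (hEt : ∀ x t, star (E x t) * deriv (fun s => E x s) t = Q₂ x t)
    -- γ = E a E⁻¹ and its partial derivatives
    (γ γx γxx γt : ℝ → ℝ → Matrix (Fin k ⊕ Fin m) (Fin k ⊕ Fin m) ℂ)
    (hγ : ∀ x t, γ x t = E x t * a * star (E x t))
    (hγx : ∀ x t, γx x t = deriv (fun y => γ y t) x)
    (hγxx : ∀ x t, γxx x t = deriv (fun y => γx y t) x)
    (hγt : ∀ x t, γt x t = deriv (fun s => γ x s) t) :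
    -- γ satisfies the GNLS equation γ_t = [γ, γ_xx]
    ∀ x t, γt x t = γ x t * γxx x t - γxx x t * γ x t := by
  -- partial differentiability
  have hqD : ∀ y t, HasDerivAt (fun y' => q y' t) (qx y t) y := fun y t => by
    rw [hqx]
    exact (((hq.comp (contDiff_id.prodMk contDiff_const)).differentiable (by simp)) y).hasDerivAt
  -- unitarity
  have hstar : ∀ x t, (E x t)ᴴ * E x t = 1 := fun x t => by
    have := (Matrix.mem_unitaryGroup_iff').mp (hEunitary x t)
    simpa [Matrix.star_eq_conjTranspose] using this
  have hstar' : ∀ x t, E x t * (E x t)ᴴ = 1 := fun x t => by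
    have := (Matrix.mem_unitaryGroup_iff).mp (hEunitary x t)
    simpa [Matrix.star_eq_conjTranspose] using this
  -- E_x = E u
  have hED : ∀ y t, HasDerivAt (fun y' => E y' t) (E y t * u y t) y := fun y t => by
    have hd : Differentiable ℝ (fun y' => E y' t) :=
      (hE.comp (contDiff_id.prodMk contDiff_const)).differentiable (by simp)
    have h := (hd y).hasDerivAt
    have e : E y t * u y t = deriv (fun y' => E y' t) y := by
      rw [← hEx y t, Matrix.star_eq_conjTranspose, ← mul_assoc, hstar' y t, one_mul]
    rwa [e]
  -- E_t = E Q₂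
  have hEDt : ∀ x t, HasDerivAt (fun s => E x s) (E x t * Q₂ x t) t := fun x t => by
    have hd : Differentiable ℝ (fun s => E x s) :=
      (hE.comp (contDiff_const.prodMk contDiff_id)).differentiable (by simp)
    have h := (hd t).hasDerivAt
    have e : E x t * Q₂ x t = deriv (fun s => E x s) t := by
      rw [← hEt x t, Matrix.star_eq_conjTranspose, ← mul_assoc, hstar' x t, one_mul]
    rwa [e]
  -- derivative of u in x
  have huD : ∀ y t, HasDerivAt (fun y' => u y' t)
      (Matrix.fromBlocks 0 (qx y t) (-(qx y t)ᴴ) 0) y := fun y t => by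
    have e : (fun y' => u y' t) = fun y' => Matrix.fromBlocks 0 (q y' t) (-(q y' t)ᴴ) 0 :=
      funext fun y' => hu y' t
    rw [e]
    exact (hqD y t).offDiagBlocks ((hqD y t).ct.neg)
  -- skew-hermitian facts
  have hustar : ∀ y t, (u y t)ᴴ = -(u y t) := fun y t => by
    rw [hu]
    simp [Matrix.fromBlocks_conjTranspose, Matrix.fromBlocks_neg]
  have hQstar : ∀ x t, (Q₂ x t)ᴴ = -(Q₂ x t) := fun x t => by
    rw [hQ₂]
    simp only [Matrix.fromBlocks_conjTranspose, Matrix.fromBlocks_neg, Matrix.conjTranspose_smul,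
      Matrix.conjTranspose_mul, Matrix.conjTranspose_conjTranspose]
    rw [Matrix.fromBlocks_inj]
    refine ⟨?_, ?_, ?_, ?_⟩ <;> simp [Complex.ext_iff, neg_smul]
  -- derivative of γ in x
  have hγD : ∀ y t, HasDerivAt (fun y' => γ y' t)
      (E y t * (u y t * a - a * u y t) * (E y t)ᴴ) y := fun y t => by
    have e : (fun y' => γ y' t) = fun y' => E y' t * a * (E y' t)ᴴ :=
      funext fun y' => by rw [hγ, Matrix.star_eq_conjTranspose]
    rw [e]
    have h := ((hED y t).matmul (hasDerivAt_const y a)).matmul ((hED y t).ct)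
    convert h using 1
    rw [Matrix.conjTranspose_mul, hustar y t]
    noncomm_ring
  have hγxF : ∀ y t, γx y t = E y t * (u y t * a - a * u y t) * (E y t)ᴴ := fun y t => by
    rw [hγx]; exact (hγD y t).deriv
  intro x t
  set ux : Matrix (Fin k ⊕ Fin m) (Fin k ⊕ Fin m) ℂ :=
    Matrix.fromBlocks 0 (qx x t) (-(qx x t)ᴴ) 0 with hux
  -- second derivative of γ in x
  have hγxxF : γxx x t = E x t *
      (u x t * (u x t * a - a * u x t) - (u x t * a - a * u x t) * u x t
        + (ux * a - a * ux)) * (E x t)ᴴ := by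
    rw [hγxx]
    have e : (fun y => γx y t) = fun y => E y t * (u y t * a - a * u y t) * (E y t)ᴴ :=
      funext fun y => hγxF y t
    rw [e]
    have hc : HasDerivAt (fun y => u y t * a - a * u y t) (ux * a - a * ux) x := by
      have h := (((huD x t).matmul (hasDerivAt_const x a)).sub
        ((hasDerivAt_const x a).matmul (huD x t)))
      exact h.congr_deriv (by simp [hux])
    have h := (((hED x t).matmul hc).matmul ((hED x t).ct))
    refine h.deriv.trans ?_
    rw [Matrix.conjTranspose_mul, hustar x t]
    noncomm_ring
  -- derivative of γ in t
  have hγtF : γt x t = E x t * (Q₂ x t * a - a * Q₂ x t) * (E x t)ᴴ := by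
    rw [hγt]
    have e : (fun s => γ x s) = fun s => E x s * a * (E x s)ᴴ :=
      funext fun s => by rw [hγ, Matrix.star_eq_conjTranspose]
    rw [e]
    have h := ((hEDt x t).matmul (hasDerivAt_const t a)).matmul ((hEDt x t).ct)
    refine h.deriv.trans ?_
    rw [Matrix.conjTranspose_mul, hQstar x t]
    noncomm_ring
  -- conclude
  have cancel : ∀ Z : Matrix (Fin k ⊕ Fin m) (Fin k ⊕ Fin m) ℂ,
      (E x t)ᴴ * (E x t * Z) = Z := fun Z => by
    rw [← mul_assoc, hstar x t, one_mul]
  have conj_mul : ∀ X Y : Matrix (Fin k ⊕ Fin m) (Fin k ⊕ Fin m) ℂ,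
      (E x t * X * (E x t)ᴴ) * (E x t * Y * (E x t)ᴴ) = E x t * (X * Y) * (E x t)ᴴ := by
    intro X Y
    simp only [mul_assoc, cancel]
  rw [hγtF, hγxxF, hγ, Matrix.star_eq_conjTranspose, conj_mul, conj_mul,
    ← Matrix.sub_mul, ← Matrix.mul_sub]
  congr 2
  exact key_identity (q x t) (qx x t) a ha (u x t) ux (Q₂ x t) (hu x t) hux (hQ₂ x t)
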